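/- Feasibility and exact delivery of the constant-input discrete policy: with ẑ = inf{x̂ ≥ 0 : Σᵢ p̄ᵢ max{min{xᵢ − x̂, Δt}, 0} ≤ P^r Δt} and inputs uᵢ = p̄ᵢ · max{min{(xᵢ − ẑ)/Δt, 1}, 0}, we have (i) 0 ≤ uᵢ ≤ p̄ᵢ for all i, (ii) the final state zᵢ = xᵢ − uᵢ Δt / p̄ᵢ satisfies zᵢ = min{max{xᵢ − Δt, ẑ}, xᵢ} ≥ 0, and (iii) if Σᵢ p̄ᵢ min{xᵢ, Δt} ≥ P^r Δt then Σᵢ uᵢ = P^r, otherwise Σᵢ uᵢ = Σᵢ p̄ᵢ min{xᵢ, Δt}/Δt (the maximum deliverable average power). -/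
import Mathlib


open Finset

/-- Feasibility and exact delivery of the constant-input discrete policy:
with threshold `ẑ = inf {x̂ ≥ 0 : Σᵢ p̄ᵢ max {min {xᵢ − x̂, Δt}, 0} ≤ Pʳ Δt}`
and inputs `uᵢ = p̄ᵢ max {min {(xᵢ − ẑ)/Δt, 1}, 0}`:
(i) `0 ≤ uᵢ ≤ p̄ᵢ`; (ii) the final state `zᵢ = xᵢ − uᵢ Δt / p̄ᵢ` equals
`min {max {xᵢ − Δt, ẑ}, xᵢ}` and is nonnegative; (iii) if
`Σᵢ p̄ᵢ min {xᵢ, Δt} ≥ Pʳ Δt` then `Σᵢ uᵢ = Pʳ`, otherwise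
`Σᵢ uᵢ = Σᵢ p̄ᵢ min {xᵢ, Δt} / Δt`. -/
theorem constant_input_policy (n : ℕ) (x pbar : Fin n → ℝ)
    (hx : ∀ i, 0 ≤ x i) (hp : ∀ i, 0 < pbar i)
    (Δt : ℝ) (hΔt : 0 < Δt) (Pr : ℝ) (hPr : 0 ≤ Pr)
    (zhat : ℝ)
    (hzhat : zhat = sInf {z : ℝ | 0 ≤ z ∧
      (∑ i, pbar i * max (min (x i - z) Δt) 0) ≤ Pr * Δt})
    (u : Fin n → ℝ)
    (hu : ∀ i, u i = pbar i * max (min ((x i - zhat) / Δt) 1) 0)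
    (z : Fin n → ℝ)
    (hz : ∀ i, z i = x i - u i * Δt / pbar i) :
    (∀ i, 0 ≤ u i ∧ u i ≤ pbar i) ∧
    (∀ i, z i = min (max (x i - Δt) zhat) (x i) ∧ 0 ≤ z i) ∧
    (if Pr * Δt ≤ ∑ i, pbar i * min (x i) Δt
      then (∑ i, u i) = Pr
      else (∑ i, u i) = (∑ i, pbar i * min (x i) Δt) / Δt) := by
  -- notation
  have hPsum : (0:ℝ) ≤ ∑ i, pbar i := Finset.sum_nonneg fun i _ => (hp i).le
  set f : ℝ → ℝ := fun zv => ∑ i, pbar i * max (min (x i - zv) Δt) 0 with hfdef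
  have hfc : Continuous f := by
    apply continuous_finset_sum
    intro i _
    exact continuous_const.mul
      (((continuous_const.sub continuous_id).min continuous_const).max continuous_const)
  have hSne : (∑ j, x j) ∈ {zv : ℝ | 0 ≤ zv ∧ f zv ≤ Pr * Δt} := by
    constructor
    · exact Finset.sum_nonneg fun i _ => hx i
    · have hf0 : f (∑ j, x j) = 0 := by
        apply Finset.sum_eq_zero
        intro i _
        have h1 : x i - ∑ j, x j ≤ 0 := by
          have := Finset.single_le_sum (f := x) (fun j _ => hx j) (Finset.mem_univ i)
          linarith
        have h2 : max (min (x i - ∑ j, x j) Δt) 0 = 0 :=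
          max_eq_right (le_trans (min_le_left _ _) h1)
        rw [h2, mul_zero]
      rw [hf0]; positivity
  have hSbd : BddBelow {zv : ℝ | 0 ≤ zv ∧ f zv ≤ Pr * Δt} := ⟨0, fun z hz => hz.1⟩
  have hSclosed : IsClosed {zv : ℝ | 0 ≤ zv ∧ f zv ≤ Pr * Δt} :=
    (isClosed_le continuous_const continuous_id).inter (isClosed_le hfc continuous_const)
  have hzhat' : zhat = sInf {zv : ℝ | 0 ≤ zv ∧ f zv ≤ Pr * Δt} := hzhat
  have hmem : zhat ∈ {zv : ℝ | 0 ≤ zv ∧ f zv ≤ Pr * Δt} := by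
    rw [hzhat']
    exact hSclosed.csInf_mem ⟨_, hSne⟩ hSbd
  have hz0 : 0 ≤ zhat := hmem.1
  -- rewrite u in terms of unscaled clamp
  have hu' : ∀ i, u i = pbar i * max (min (x i - zhat) Δt) 0 / Δt := by
    intro i
    rw [hu i]
    have h1 : max (min ((x i - zhat) / Δt) 1) 0 = max (min (x i - zhat) Δt) 0 / Δt := by
      rcases le_total (x i - zhat) 0 with h | h
      · rw [max_eq_right (le_trans (min_le_left _ _)
            (div_nonpos_of_nonpos_of_nonneg h hΔt.le)),
          max_eq_right (le_trans (min_le_left _ _) h), zero_div]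
      · rcases le_total (x i - zhat) Δt with h2 | h2
        · rw [min_eq_left ((div_le_one hΔt).mpr h2)]
          rw [min_eq_left h2]
          rw [max_eq_left (div_nonneg h hΔt.le)]
          rw [max_eq_left h]
        · rw [min_eq_right ((le_div_iff₀ hΔt).mpr (by linarith))]
          rw [min_eq_right h2]
          rw [max_eq_left (by norm_num : (0:ℝ) ≤ 1)]
          rw [max_eq_left hΔt.le, div_self hΔt.ne']
    rw [h1, mul_div_assoc]
  have hsumu : ∑ i, u i = f zhat / Δt := by
    rw [hfdef, Finset.sum_div]
    exact Finset.sum_congr rfl fun i _ => hu' i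
  have hf00 : f 0 = ∑ i, pbar i * min (x i) Δt := by
    apply Finset.sum_congr rfl
    intro i _
    rw [sub_zero, max_eq_left (le_min (hx i) hΔt.le)]
  refine ⟨?_, ?_, ?_⟩
  · intro i
    rw [hu i]
    constructor
    · exact mul_nonneg (hp i).le (le_max_right _ _)
    · calc pbar i * max (min ((x i - zhat) / Δt) 1) 0
          ≤ pbar i * 1 := by
            apply mul_le_mul_of_nonneg_left _ (hp i).le
            exact max_le (min_le_right _ _) zero_le_one
        _ = pbar i := mul_one _
  · intro i
    have hzi : z i = x i - max (min (x i - zhat) Δt) 0 := by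
      rw [hz i, hu' i, div_mul_cancel₀ _ hΔt.ne', mul_div_cancel_left₀ _ (hp i).ne']
    have key : x i - max (min (x i - zhat) Δt) 0 = min (max (x i - Δt) zhat) (x i) := by
      rcases le_total (x i - zhat) 0 with h1 | h1
      · rw [max_eq_right (le_trans (min_le_left _ _) h1),
          max_eq_right (by linarith), min_eq_right (by linarith)]
        ring
      · rcases le_total (x i - zhat) Δt with h2 | h2
        · rw [min_eq_left h2, max_eq_left h1,
            max_eq_right (by linarith), min_eq_left (by linarith)]
          ring
        · rw [min_eq_right h2, max_eq_left hΔt.le,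
            max_eq_left (by linarith), min_eq_left (by linarith)]
    constructor
    · rw [hzi, key]
    · rw [hzi, key]
      exact le_min (le_trans hz0 (le_max_right _ _)) (hx i)
  · split_ifs with hcase
    · -- need f zhat = Pr * Δt
      have hle : f zhat ≤ Pr * Δt := hmem.2
      have hge : Pr * Δt ≤ f zhat := by
        rcases eq_or_lt_of_le hz0 with h0 | h0
        · rw [← h0, hf00]
          exact hcase
        · by_contra hlt
          push_neg at hlt
          set P : ℝ := ∑ i, pbar i with hP
          set ε : ℝ := min zhat ((Pr * Δt - f zhat) / (P + 1)) with hε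
          have hεpos : 0 < ε := lt_min h0 (div_pos (by linarith) (by linarith))
          have hεz : ε ≤ zhat := min_le_left _ _
          have hεP : ε * (P + 1) ≤ Pr * Δt - f zhat := by
            have h3 : ε ≤ (Pr * Δt - f zhat) / (P + 1) := min_le_right _ _
            calc ε * (P + 1) ≤ ((Pr * Δt - f zhat) / (P + 1)) * (P + 1) := by
                  apply mul_le_mul_of_nonneg_right h3 (by linarith)
              _ = Pr * Δt - f zhat := by field_simp
          have hpoint : ∀ a : ℝ, max (min (a + ε) Δt) 0 ≤ max (min a Δt) 0 + ε := by
            intro a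
            have h0' : (0:ℝ) ≤ max (min a Δt) 0 + ε := by
              have := le_max_right (min a Δt) (0:ℝ); linarith
            apply max_le _ h0'
            calc min (a + ε) Δt ≤ min (a + ε) (Δt + ε) := min_le_min le_rfl (by linarith)
              _ = min a Δt + ε := by rw [← min_add_add_right]
              _ ≤ max (min a Δt) 0 + ε := by
                  have := le_max_left (min a Δt) (0:ℝ); linarith
          have hstep : f (zhat - ε) ≤ f zhat + P * ε := by
            calc f (zhat - ε) ≤ ∑ i, (pbar i * max (min (x i - zhat) Δt) 0 + pbar i * ε) := by
                  apply Finset.sum_le_sum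
                  intro i _
                  rw [← mul_add]
                  apply mul_le_mul_of_nonneg_left _ (hp i).le
                  have h4 := hpoint (x i - zhat)
                  have h5 : x i - (zhat - ε) = x i - zhat + ε := by ring
                  rw [h5]
                  exact h4
              _ = f zhat + P * ε := by
                  rw [Finset.sum_add_distrib, ← Finset.sum_mul]
          have hmem2 : zhat - ε ∈ {zv : ℝ | 0 ≤ zv ∧ f zv ≤ Pr * Δt} := by
            constructor
            · linarith
            · nlinarith [hεpos]
          have hcs := csInf_le hSbd hmem2
          rw [← hzhat'] at hcs
          linarith
      have hfeq : f zhat = Pr * Δt := le_antisymm hle hge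
      rw [hsumu, hfeq]
      field_simp
    · push_neg at hcase
      have h0mem : (0:ℝ) ∈ {zv : ℝ | 0 ≤ zv ∧ f zv ≤ Pr * Δt} := by
        refine ⟨le_refl _, ?_⟩
        rw [hf00]
        exact hcase.le
      have hzle : zhat ≤ 0 := by
        have hcs := csInf_le hSbd h0mem
        rw [← hzhat'] at hcs
        exact hcs
      have hz00 : zhat = 0 := le_antisymm hzle hz0
      rw [hsumu, hz00, hf00]
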